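/- arXiv:math/0003123 — 2 statements merged into one kernel-verified Lean document; each statement's English description precedes it below -/
import Mathlib

section
/- Let h be a simple real form of a finite-dimensional complex semisimple Lie algebra s. (i) s is not simple (as a complex Lie algebra) if and only if h admits a complex structure. (ii) In that case, s is the direct product of two simple ideals s_1, s_2, each isomorphic to h. (iii) Still in that case, there exists a ℂ-antilinear isomorphism τ of Lie algebras from s_1 onto s_2 such that h = {(X, τ(X)) : X ∈ s_1}. -/
set_option linter.unusedSectionVars false
set_option maxHeartbeats 1000000

namespace DelormeAux
variable {s : Type*} [LieRing s] [LieAlgebra ℝ s] [LieAlgebra ℂ s] [IsScalarTower ℝ ℂ s]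
  (h : LieSubalgebra ℝ s)

lemma smul_expand (c : ℂ) (v : s) :
    c • v = (c.re : ℝ) • v + (c.im : ℝ) • ((Complex.I : ℂ) • v) := by
  rw [← algebraMap_smul ℂ (c.re) v, ← algebraMap_smul ℂ (c.im) ((Complex.I : ℂ) • v),
    smul_smul, ← add_smul]
  congr 1
  exact (Complex.re_add_im c).symm

lemma lie_formula (y z y' z' : h) :
    ⁅(y : s) + (Complex.I : ℂ) • (z : s), (y' : s) + (Complex.I : ℂ) • (z' : s)⁆ =
      ((⁅y, y'⁆ - ⁅z, z'⁆ : h) : s) + (Complex.I : ℂ) • ((⁅y, z'⁆ + ⁅z, y'⁆ : h) : s) := by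
  simp only [lie_add, add_lie, lie_smul, smul_lie, smul_add, smul_smul, Complex.I_mul_I,
    neg_one_smul, LieSubalgebra.coe_bracket, AddSubgroupClass.coe_sub, AddMemClass.coe_add]
  abel

noncomputable def mI : s →ₗ[ℝ] s where
  toFun x := (Complex.I : ℂ) • x
  map_add' x y := smul_add _ x y
  map_smul' r x := (smul_comm r (Complex.I : ℂ) x).symm

@[simp] lemma mI_apply (x : s) : mI x = (Complex.I : ℂ) • x := rfl

noncomputable def E : (h × h) →ₗ[ℝ] s :=
  (h.toSubmodule.subtype).coprod (mI ∘ₗ h.toSubmodule.subtype)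

@[simp] lemma E_apply (p : h × h) : E h p = (p.1 : s) + (Complex.I : ℂ) • (p.2 : s) := rfl

variable
  (hform₁ : ∀ x : s, ∃ y ∈ h, ∃ z ∈ h, x = y + (Complex.I : ℂ) • z)
  (hform₂ : ∀ y ∈ h, ∀ z ∈ h, y + (Complex.I : ℂ) • z = (0 : s) → y = 0 ∧ z = 0)

include hform₁ hform₂ in
lemma E_bij : Function.Bijective (E h) := by
  constructor
  · rw [injective_iff_map_eq_zero]
    rintro ⟨y, z⟩ hyz
    obtain ⟨hy, hz⟩ := hform₂ y y.2 z z.2 hyz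
    exact Prod.ext (Subtype.ext hy) (Subtype.ext hz)
  · intro x
    obtain ⟨y, hy, z, hz, rfl⟩ := hform₁ x
    exact ⟨(⟨y, hy⟩, ⟨z, hz⟩), rfl⟩

noncomputable def eE : (h × h) ≃ₗ[ℝ] s := LinearEquiv.ofBijective (E h) (E_bij h hform₁ hform₂)

/-- conjugation with respect to the real form `h` -/
noncomputable def σ : s →ₗ[ℝ] s :=
  (E h) ∘ₗ (LinearMap.prodMap LinearMap.id (-LinearMap.id)) ∘ₗ
    (eE h hform₁ hform₂ : (h × h) ≃ₗ[ℝ] s).symm.toLinearMap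

lemma sigma_spec (y z : h) :
    σ h hform₁ hform₂ ((y : s) + (Complex.I : ℂ) • (z : s))
      = (y : s) - (Complex.I : ℂ) • (z : s) := by
  have : ((eE h hform₁ hform₂).symm ((y : s) + (Complex.I : ℂ) • (z : s))) = (y, z) :=
    (LinearEquiv.symm_apply_eq _).mpr rfl
  simp [σ, this, sub_eq_add_neg]

lemma sigma_decomp (x : s) :
    ∃ y z : h, x = (y : s) + (Complex.I : ℂ) • (z : s) ∧
      σ h hform₁ hform₂ x = (y : s) - (Complex.I : ℂ) • (z : s) := by
  obtain ⟨y, hy, z, hz, rfl⟩ := hform₁ x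
  refine ⟨⟨y, hy⟩, ⟨z, hz⟩, rfl, ?_⟩
  exact sigma_spec h hform₁ hform₂ ⟨y, hy⟩ ⟨z, hz⟩

lemma sigma_mem (y : h) : σ h hform₁ hform₂ (y : s) = (y : s) := by
  have := sigma_spec h hform₁ hform₂ y 0
  simpa using this

lemma sigma_sigma (x : s) : σ h hform₁ hform₂ (σ h hform₁ hform₂ x) = x := by
  obtain ⟨y, z, rfl, hs⟩ := sigma_decomp h hform₁ hform₂ x
  rw [hs]
  have := sigma_spec h hform₁ hform₂ y (-z)
  simp only [NegMemClass.coe_neg, smul_neg] at this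
  rw [sub_eq_add_neg, ← smul_neg] at *
  simpa [sub_eq_add_neg] using this

lemma sigma_injective : Function.Injective (σ h hform₁ hform₂) := fun a b hab => by
  rw [← sigma_sigma h hform₁ hform₂ a, hab, sigma_sigma]

lemma sigma_eq_self_iff (x : s) : σ h hform₁ hform₂ x = x ↔ x ∈ h := by
  constructor
  · intro hx
    obtain ⟨y, z, rfl, hs⟩ := sigma_decomp h hform₁ hform₂ x
    rw [hs, sub_eq_add_neg] at hx
    have : (Complex.I : ℂ) • (z : s) = 0 := by
      have := sub_eq_zero.mpr hx
      rw [sub_eq_add_neg] at this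
      have h2 : (2 : ℝ) • ((Complex.I : ℂ) • (z : s)) = 0 := by
        rw [two_smul]; linear_combination (norm := module) -this
      simpa using h2
    have hz : (z : s) = 0 := by
      have := congrArg (fun w => (Complex.I : ℂ)⁻¹ • w) this
      simpa [smul_smul, inv_mul_cancel₀ Complex.I_ne_zero] using this
    simp [hz]
  · intro hx
    exact sigma_mem h hform₁ hform₂ ⟨x, hx⟩

lemma sigma_I_smul (x : s) :
    σ h hform₁ hform₂ ((Complex.I : ℂ) • x) = -((Complex.I : ℂ) • σ h hform₁ hform₂ x) := by
  obtain ⟨y, z, rfl, hs⟩ := sigma_decomp h hform₁ hform₂ x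
  have key : (Complex.I : ℂ) • ((y : s) + (Complex.I : ℂ) • (z : s))
      = ((-z : h) : s) + (Complex.I : ℂ) • (y : s) := by
    simp [smul_add, smul_smul, Complex.I_mul_I, neg_one_smul]
    abel
  rw [key, sigma_spec h hform₁ hform₂ (-z) y, hs]
  simp [smul_sub, smul_add, smul_smul, Complex.I_mul_I]
  abel

lemma sigma_smul (c : ℂ) (x : s) :
    σ h hform₁ hform₂ (c • x) = (starRingEnd ℂ c) • σ h hform₁ hform₂ x := by
  rw [smul_expand c x, map_add, map_smul, map_smul, sigma_I_smul,
    smul_expand (starRingEnd ℂ c) (σ h hform₁ hform₂ x)]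
  simp [smul_neg]

lemma sigma_lie (x x' : s) :
    σ h hform₁ hform₂ ⁅x, x'⁆ = ⁅σ h hform₁ hform₂ x, σ h hform₁ hform₂ x'⁆ := by
  obtain ⟨y, z, rfl, hs⟩ := sigma_decomp h hform₁ hform₂ x
  obtain ⟨y', z', rfl, hs'⟩ := sigma_decomp h hform₁ hform₂ x'
  rw [hs, hs', lie_formula, sigma_spec]
  have expand : ((y : s) - (Complex.I : ℂ) • (z : s)) = ((y : s) + (Complex.I : ℂ) • ((-z : h) : s)) := by
    simp [sub_eq_add_neg]
  have expand' : ((y' : s) - (Complex.I : ℂ) • (z' : s)) = ((y' : s) + (Complex.I : ℂ) • ((-z' : h) : s)) := by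
    simp [sub_eq_add_neg]
  rw [expand, expand', lie_formula]
  simp only [sub_eq_add_neg, smul_add, smul_neg, LieSubalgebra.coe_bracket,
    AddSubgroupClass.coe_sub, AddMemClass.coe_add, NegMemClass.coe_neg, lie_neg, neg_lie,
    add_lie, lie_add, neg_neg, smul_neg]
  abel


lemma twoTorsionFree (x : s) (hx : x + x = 0) : x = 0 := by
  have h2 : (2 : ℝ) • x = 0 := by rw [two_smul]; exact hx
  have := congrArg (fun w => (2⁻¹ : ℝ) • w) h2
  simpa [smul_smul] using this

/-- extension of a map `J : h → h` to `s`, `y + I z ↦ J y + I (J z)` -/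
noncomputable def Jext (J : h →ₗ[ℝ] h) : s →ₗ[ℝ] s :=
  (E h) ∘ₗ (LinearMap.prodMap J J) ∘ₗ (eE h hform₁ hform₂ : (h × h) ≃ₗ[ℝ] s).symm.toLinearMap

lemma Jext_spec (J : h →ₗ[ℝ] h) (y z : h) :
    Jext h hform₁ hform₂ J ((y : s) + (Complex.I : ℂ) • (z : s))
      = ((J y : h) : s) + (Complex.I : ℂ) • ((J z : h) : s) := by
  have : ((eE h hform₁ hform₂).symm ((y : s) + (Complex.I : ℂ) • (z : s))) = (y, z) :=
    (LinearEquiv.symm_apply_eq _).mpr rfl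
  simp [Jext, this]

lemma Jext_decomp (J : h →ₗ[ℝ] h) (x : s) :
    ∃ y z : h, x = (y : s) + (Complex.I : ℂ) • (z : s) ∧
      Jext h hform₁ hform₂ J x = ((J y : h) : s) + (Complex.I : ℂ) • ((J z : h) : s) := by
  obtain ⟨y, hy, z, hz, rfl⟩ := hform₁ x
  refine ⟨⟨y, hy⟩, ⟨z, hz⟩, rfl, ?_⟩
  exact Jext_spec h hform₁ hform₂ J ⟨y, hy⟩ ⟨z, hz⟩

lemma Jext_I_smul (J : h →ₗ[ℝ] h) (x : s) :
    Jext h hform₁ hform₂ J ((Complex.I : ℂ) • x)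
      = (Complex.I : ℂ) • Jext h hform₁ hform₂ J x := by
  obtain ⟨y, z, rfl, hs⟩ := Jext_decomp h hform₁ hform₂ J x
  have key : (Complex.I : ℂ) • ((y : s) + (Complex.I : ℂ) • (z : s))
      = ((-z : h) : s) + (Complex.I : ℂ) • (y : s) := by
    simp [smul_add, smul_smul, Complex.I_mul_I, neg_one_smul]
    abel
  rw [key, Jext_spec h hform₁ hform₂ J (-z) y, hs]
  simp [smul_add, smul_smul, Complex.I_mul_I]
  abel

lemma Jext_smul (J : h →ₗ[ℝ] h) (c : ℂ) (x : s) :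
    Jext h hform₁ hform₂ J (c • x) = c • Jext h hform₁ hform₂ J x := by
  rw [smul_expand c x, map_add, map_smul, map_smul, Jext_I_smul,
    smul_expand c (Jext h hform₁ hform₂ J x)]

lemma Jext_lie_right (J : h →ₗ[ℝ] h) (hJ : ∀ x y : h, J ⁅x, y⁆ = ⁅x, J y⁆) (a b : s) :
    Jext h hform₁ hform₂ J ⁅a, b⁆ = ⁅a, Jext h hform₁ hform₂ J b⁆ := by
  obtain ⟨y, z, rfl, -⟩ := Jext_decomp h hform₁ hform₂ J a
  obtain ⟨y', z', rfl, hs'⟩ := Jext_decomp h hform₁ hform₂ J b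
  rw [lie_formula, Jext_spec, hs', lie_formula]
  simp only [map_sub, map_add, hJ]

include hform₁ hform₂ in
/-- If `h` has a complex structure, `s` is not simple. -/
lemma not_simple_of_J [LieAlgebra.IsSimple ℝ h] (J : h →ₗ[ℝ] h)
    (hJ2 : ∀ x : h, J (J x) = -x) (hJr : ∀ x y : h, J ⁅x, y⁆ = ⁅x, J y⁆) :
    ¬ LieAlgebra.IsSimple ℂ s := by
  intro hs
  -- a nonzero element of h
  obtain ⟨w, hw⟩ : ∃ w : h, w ≠ 0 := by
    by_contra hcon
    push_neg at hcon
    exact (LieAlgebra.IsSimple.non_abelian ℝ (L := h))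
      ⟨fun x y => by rw [hcon ⁅x, y⁆]⟩
  -- the +i eigenspace of Jext
  let T := Jext h hform₁ hform₂ J
  let sp : LieIdeal ℂ s :=
    { carrier := {x | T x = (Complex.I : ℂ) • x}
      add_mem' := by
        intro a b (ha : T a = _) (hb : T b = _)
        show T (a + b) = _
        rw [map_add, ha, hb, smul_add]
      zero_mem' := by show T 0 = _; simp
      smul_mem' := by
        intro c x (hx : T x = _)
        show T (c • x) = _
        rw [Jext_smul, hx, smul_comm]
      lie_mem := by
        intro a m (hm : T m = _)
        show T ⁅a, m⁆ = _
        rw [Jext_lie_right h hform₁ hform₂ J hJr, hm, lie_smul] }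
  have mem_sp : ∀ x : s, x ∈ sp ↔ T x = (Complex.I : ℂ) • x := fun x => Iff.rfl
  -- u = w - I (J w) is a nonzero element of sp
  have hu_mem : ((w : s) + (Complex.I : ℂ) • ((-(J w) : h) : s)) ∈ sp := by
    rw [mem_sp, show T = Jext h hform₁ hform₂ J from rfl,
      Jext_spec h hform₁ hform₂ J w (-(J w))]
    rw [map_neg, hJ2]
    simp [smul_add, smul_smul, Complex.I_mul_I]
    abel
  have hu_ne : ((w : s) + (Complex.I : ℂ) • ((-(J w) : h) : s)) ≠ 0 := by
    intro hcon
    obtain ⟨h1, -⟩ := hform₂ _ (w : h).2 _ (-(J w) : h).2 hcon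
    exact hw (Subtype.ext h1)
  -- v = w + I (J w) is a nonzero element not in sp
  have hv_not : ¬ (((w : s) + (Complex.I : ℂ) • ((J w : h) : s)) ∈ sp) := by
    rw [mem_sp, show T = Jext h hform₁ hform₂ J from rfl,
      Jext_spec h hform₁ hform₂ J w (J w)]
    rw [hJ2]
    intro hcon
    simp only [smul_add, smul_smul, Complex.I_mul_I, neg_one_smul, NegMemClass.coe_neg] at hcon
    -- hcon : J w + I • (-w) = I • w + (- J w) roughly
    have : ((J w : h) : s) + (Complex.I : ℂ) • (((-w) : h) : s) = 0 := by
      have e : (((J w : h) : s) + (Complex.I : ℂ) • ((-w : h) : s))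
          + (((J w : h) : s) + (Complex.I : ℂ) • ((-w : h) : s)) = 0 := by
        simp only [NegMemClass.coe_neg, smul_neg]
        linear_combination (norm := module) hcon
      exact twoTorsionFree _ e
    obtain ⟨h1, -⟩ := hform₂ _ (J w : h).2 _ ((-w : h)).2 this
    have hJw : J w = 0 := Subtype.ext (by simpa using h1)
    have h2 : J (J w) = 0 := by rw [hJw, map_zero]
    rw [hJ2] at h2
    exact hw (neg_eq_zero.mp h2)
  rcases hs.eq_bot_or_eq_top sp with hbot | htop
  · rw [hbot] at hu_mem
    exact hu_ne (by simpa using hu_mem)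
  · rw [htop] at hv_not
    exact hv_not trivial


/-- image of an ideal under σ (implemented as preimage, since σ is an involution) -/
noncomputable def sIdeal (I : LieIdeal ℂ s) : LieIdeal ℂ s where
  carrier := {x | σ h hform₁ hform₂ x ∈ I}
  add_mem' := by
    intro a b ha hb
    simp only [Set.mem_setOf_eq, map_add] at *
    exact add_mem ha hb
  zero_mem' := by simp
  smul_mem' := by
    intro c x hx
    simp only [Set.mem_setOf_eq] at *
    rw [sigma_smul]
    exact (I : Submodule ℂ s).smul_mem _ hx
  lie_mem := by
    intro a m hm
    simp only [Set.mem_setOf_eq] at *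
    rw [sigma_lie]
    exact I.lie_mem hm

lemma mem_sIdeal (I : LieIdeal ℂ s) (x : s) :
    x ∈ sIdeal h hform₁ hform₂ I ↔ σ h hform₁ hform₂ x ∈ I := Iff.rfl

lemma sIdeal_sIdeal (I : LieIdeal ℂ s) :
    sIdeal h hform₁ hform₂ (sIdeal h hform₁ hform₂ I) = I := by
  ext x
  rw [mem_sIdeal, mem_sIdeal, sigma_sigma]

lemma sIdeal_mono {I K : LieIdeal ℂ s} (hIK : I ≤ K) :
    sIdeal h hform₁ hform₂ I ≤ sIdeal h hform₁ hform₂ K := fun _ hx => hIK hx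

lemma sIdeal_bot : sIdeal h hform₁ hform₂ (⊥ : LieIdeal ℂ s) = ⊥ := by
  ext x
  rw [mem_sIdeal, LieSubmodule.mem_bot, LieSubmodule.mem_bot]
  constructor
  · intro hx
    have := congrArg (σ h hform₁ hform₂) hx
    rwa [sigma_sigma, map_zero] at this
  · intro hx; rw [hx, map_zero]

lemma isAtom_sIdeal {I : LieIdeal ℂ s} (hI : IsAtom I) :
    IsAtom (sIdeal h hform₁ hform₂ I) := by
  constructor
  · intro e
    apply hI.1
    rw [← sIdeal_sIdeal h hform₁ hform₂ I, e, sIdeal_bot]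
  · intro b hb
    have h1 : sIdeal h hform₁ hform₂ b ≤ I := by
      have := sIdeal_mono h hform₁ hform₂ hb.le
      rwa [sIdeal_sIdeal] at this
    have h2 : sIdeal h hform₁ hform₂ b ≠ I := by
      intro e
      apply hb.ne
      rw [← sIdeal_sIdeal h hform₁ hform₂ b, e]
    have := hI.2 _ (lt_of_le_of_ne h1 h2)
    rw [← sIdeal_sIdeal h hform₁ hform₂ b, this, sIdeal_bot]

include hform₁ hform₂ in
lemma hPart_cases [LieAlgebra.IsSimple ℝ h] (a : LieIdeal ℂ s) :
    (∀ x : h, (x : s) ∈ a → x = 0) ∨ (∀ x : h, (x : s) ∈ a) := by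
  let k : LieIdeal ℝ h :=
    { carrier := {x : h | (x : s) ∈ a}
      add_mem' := by
        intro u v hu hv
        simp only [Set.mem_setOf_eq, AddMemClass.coe_add] at *
        exact add_mem hu hv
      zero_mem' := by simp
      smul_mem' := by
        intro r x hx
        simp only [Set.mem_setOf_eq] at *
        have hc : ((r • x : h) : s) = r • (x : s) := rfl
        rw [hc, ← algebraMap_smul ℂ r (x : s)]
        exact (a : Submodule ℂ s).smul_mem _ hx
      lie_mem := by
        intro u m hm
        simp only [Set.mem_setOf_eq, LieSubalgebra.coe_bracket] at *
        exact a.lie_mem hm }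
  rcases LieAlgebra.IsSimple.eq_bot_or_eq_top (R := ℝ) (L := h) k with hk | hk
  · left
    intro x hx
    have : x ∈ k := hx
    rw [hk] at this
    exact (LieSubmodule.mem_bot _).mp this
  · right
    intro x
    have : x ∈ (⊤ : LieIdeal ℝ h) := LieSubmodule.mem_top _
    rw [← hk] at this
    exact this

include hform₁ hform₂ in
lemma stable_eq_bot (a : LieIdeal ℂ s)
    (hst : ∀ x, x ∈ a → σ h hform₁ hform₂ x ∈ a)
    (htriv : ∀ x : h, (x : s) ∈ a → x = 0) : a = ⊥ := by
  rw [LieSubmodule.eq_bot_iff]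
  intro x hx
  have hu_mem : x + σ h hform₁ hform₂ x ∈ a := add_mem hx (hst x hx)
  have hu_h : x + σ h hform₁ hform₂ x ∈ h := by
    rw [← sigma_eq_self_iff h hform₁ hform₂, map_add, sigma_sigma, add_comm]
  have hu0 : x + σ h hform₁ hform₂ x = 0 := by
    have := htriv ⟨_, hu_h⟩ hu_mem
    simpa [Subtype.ext_iff] using this
  have hIx : (Complex.I : ℂ) • x ∈ a := (a : Submodule ℂ s).smul_mem _ hx
  have hv_mem : (Complex.I : ℂ) • x + σ h hform₁ hform₂ ((Complex.I : ℂ) • x) ∈ a :=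
    add_mem hIx (hst _ hIx)
  have hv_h : (Complex.I : ℂ) • x + σ h hform₁ hform₂ ((Complex.I : ℂ) • x) ∈ h := by
    rw [← sigma_eq_self_iff h hform₁ hform₂, map_add, sigma_sigma, add_comm]
  have hv0 : (Complex.I : ℂ) • x + σ h hform₁ hform₂ ((Complex.I : ℂ) • x) = 0 := by
    have := htriv ⟨_, hv_h⟩ hv_mem
    simpa [Subtype.ext_iff] using this
  rw [sigma_I_smul] at hv0
  -- hv0 : I • x - I • σ x = 0, hence x = σ x
  have hxs : x = σ h hform₁ hform₂ x := by
    have e : (Complex.I : ℂ) • (x - σ h hform₁ hform₂ x) = 0 := by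
      rw [smul_sub]
      linear_combination (norm := module) hv0
    have := congrArg (fun w => (Complex.I : ℂ)⁻¹ • w) e
    simpa [smul_smul, inv_mul_cancel₀ Complex.I_ne_zero, sub_eq_zero] using this
  apply twoTorsionFree
  calc x + x = x + σ h hform₁ hform₂ x := by rw [← hxs]
  _ = 0 := hu0

include hform₁ hform₂ in
lemma hsub_eq_top (a : LieIdeal ℂ s) (hsub : ∀ x : h, (x : s) ∈ a) : a = ⊤ := by
  rw [eq_top_iff]
  rintro x -
  obtain ⟨y, hy, z, hz, rfl⟩ := hform₁ x
  exact add_mem (hsub ⟨y, hy⟩) ((a : Submodule ℂ s).smul_mem _ (hsub ⟨z, hz⟩))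


include hform₁ hform₂ in
lemma exists_ne_zero [LieAlgebra.IsSimple ℝ h] : ∃ w : h, w ≠ 0 := by
  by_contra hcon
  push_neg at hcon
  exact (LieAlgebra.IsSimple.non_abelian ℝ (L := h)) ⟨fun x y => by rw [hcon ⁅x, y⁆]⟩

include hform₁ hform₂ in
lemma main_construction [LieAlgebra.IsSimple ℝ h] [LieAlgebra.IsSemisimple ℂ s]
    (hns : ¬ LieAlgebra.IsSimple ℂ s) :
    ∃ s₁ s₂ : LieIdeal ℂ s, IsAtom s₁ ∧ IsAtom s₂ ∧ s₁ ⊓ s₂ = ⊥ ∧ s₁ ⊔ s₂ = ⊤ ∧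
      (∀ x ∈ s₁, σ h hform₁ hform₂ x ∈ s₂) ∧ (∀ x ∈ s₂, σ h hform₁ hform₂ x ∈ s₁) ∧
      (∀ z : s, z ∈ h ↔ ∃ x ∈ s₁, z = x + σ h hform₁ hform₂ x) := by
  obtain ⟨w, hw⟩ := exists_ne_zero h hform₁ hform₂
  have hbotne : (⊥ : LieIdeal ℂ s) ≠ ⊤ := by
    intro e
    apply hw
    have : (w : s) ∈ (⊤ : LieIdeal ℂ s) := LieSubmodule.mem_top _
    rw [← e, LieSubmodule.mem_bot] at this
    exact Subtype.ext this
  -- existence of an atom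
  obtain ⟨s₁, hs₁⟩ : ∃ I : LieIdeal ℂ s, IsAtom I := by
    by_contra hno
    push_neg at hno
    have he : {I : LieIdeal ℂ s | IsAtom I} = ∅ := Set.eq_empty_iff_forall_notMem.mpr hno
    have := LieAlgebra.IsSemisimple.sSup_atoms_eq_top (R := ℂ) (L := s)
    rw [he, sSup_empty] at this
    exact hbotne this
  have hs₁top : s₁ ≠ ⊤ := by
    intro e
    apply hns
    constructor
    · intro K
      rcases eq_or_ne K ⊤ with hK | hK
      · right; exact hK
      · left
        exact hs₁.2 K (lt_of_le_of_ne (e ▸ le_top) (e ▸ hK))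
    · intro hab
      exact LieAlgebra.IsSemisimple.non_abelian_of_isAtom s₁ hs₁
        (by rw [e]; exact (lie_abelian_iff_equiv_lie_abelian LieIdeal.topEquiv).mpr hab)
  set s₂ := sIdeal h hform₁ hform₂ s₁ with hs₂def
  have hs₂ : IsAtom s₂ := isAtom_sIdeal h hform₁ hform₂ hs₁
  have hst₁ : ∀ x ∈ s₁, σ h hform₁ hform₂ x ∈ s₂ := by
    intro x hx
    rw [hs₂def, mem_sIdeal, sigma_sigma]
    exact hx
  have hst₂ : ∀ x ∈ s₂, σ h hform₁ hform₂ x ∈ s₁ := by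
    intro x hx
    exact hx
  -- the intersection is ⊥
  have hinf : s₁ ⊓ s₂ = ⊥ := by
    rcases hPart_cases h hform₁ hform₂ (s₁ ⊓ s₂) with hc | hc
    · apply stable_eq_bot h hform₁ hform₂ _ _ hc
      intro x hx
      rw [LieSubmodule.mem_inf] at hx ⊢
      exact ⟨hst₂ x hx.2, hst₁ x hx.1⟩
    · exfalso
      apply hs₁top
      have htop : s₁ ⊓ s₂ = ⊤ := hsub_eq_top h hform₁ hform₂ _ hc
      have := inf_le_left (a := s₁) (b := s₂)
      rw [htop] at this
      exact top_le_iff.mp this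
  have hsup : s₁ ⊔ s₂ = ⊤ := by
    rcases hPart_cases h hform₁ hform₂ (s₁ ⊔ s₂) with hc | hc
    · exfalso
      apply hs₁.1
      have hbot : s₁ ⊔ s₂ = ⊥ := by
        apply stable_eq_bot h hform₁ hform₂ _ _ hc
        intro x hx
        rw [LieSubmodule.mem_sup] at hx ⊢
        obtain ⟨u, hu, v, hv, rfl⟩ := hx
        exact ⟨σ h hform₁ hform₂ v, hst₂ v hv, σ h hform₁ hform₂ u, hst₁ u hu,
          by rw [map_add, add_comm]⟩
      have := le_sup_left (a := s₁) (b := s₂)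
      rw [hbot] at this
      exact le_bot_iff.mp this
    · exact hsub_eq_top h hform₁ hform₂ _ hc
  have hdisj : ∀ x : s, x ∈ s₁ → x ∈ s₂ → x = 0 := by
    intro x h1 h2
    have : x ∈ s₁ ⊓ s₂ := (LieSubmodule.mem_inf _ _ _).mpr ⟨h1, h2⟩
    rw [hinf, LieSubmodule.mem_bot] at this
    exact this
  refine ⟨s₁, s₂, hs₁, hs₂, hinf, hsup, hst₁, hst₂, ?_⟩
  intro z
  constructor
  · intro hz
    have hzfix : σ h hform₁ hform₂ z = z := (sigma_eq_self_iff h hform₁ hform₂ z).mpr hz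
    have : z ∈ s₁ ⊔ s₂ := by rw [hsup]; exact LieSubmodule.mem_top _
    rw [LieSubmodule.mem_sup] at this
    obtain ⟨u, hu, v, hv, huv⟩ := this
    have key : u - σ h hform₁ hform₂ v = 0 := by
      apply hdisj
      · exact sub_mem hu (hst₂ v hv)
      · -- u - σ v ∈ s₂ : u - σ v = σ u - v + (stuff)... use : u - σv = (σu + σv) - σv - σu + u?
        -- use: u + v = z = σ z = σ u + σ v, so u - σ v = σ u - v ∈ s₂
        have e : u - σ h hform₁ hform₂ v = σ h hform₁ hform₂ u - v := by
          have e2 : u + v = σ h hform₁ hform₂ u + σ h hform₁ hform₂ v := by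
            rw [← map_add, huv, hzfix]
          linear_combination (norm := module) e2
        rw [e]
        exact sub_mem (hst₁ u hu) hv
    have hvu : v = σ h hform₁ hform₂ u := by
      have : u = σ h hform₁ hform₂ v := by linear_combination (norm := module) key
      rw [this, sigma_sigma]
    exact ⟨u, hu, by rw [← huv, hvu]⟩
  · rintro ⟨x, hx, rfl⟩
    rw [← sigma_eq_self_iff h hform₁ hform₂, map_add, sigma_sigma, add_comm]


lemma cross_zero (s₁ s₂ : LieIdeal ℂ s) (hinf : s₁ ⊓ s₂ = ⊥)
    (u v : s) (hu : u ∈ s₁) (hv : v ∈ s₂) : ⁅u, v⁆ = 0 := by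
  have h1 : ⁅u, v⁆ ∈ s₁ := by
    rw [← lie_skew u v]
    exact neg_mem (s₁.lie_mem hu)
  have h2 : ⁅u, v⁆ ∈ s₂ := s₂.lie_mem hv
  have : ⁅u, v⁆ ∈ s₁ ⊓ s₂ := (LieSubmodule.mem_inf _ _ _).mpr ⟨h1, h2⟩
  rw [hinf, LieSubmodule.mem_bot] at this
  exact this

include hform₁ hform₂ in
lemma sum_bracket (s₁ s₂ : LieIdeal ℂ s) (hinf : s₁ ⊓ s₂ = ⊥)
    (u v : s) (hu : u ∈ s₁) (hv : v ∈ s₁)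
    (hσu : σ h hform₁ hform₂ u ∈ s₂) (hσv : σ h hform₁ hform₂ v ∈ s₂) :
    ⁅u + σ h hform₁ hform₂ u, v + σ h hform₁ hform₂ v⁆
      = ⁅u, v⁆ + σ h hform₁ hform₂ ⁅u, v⁆ := by
  have c1 : ⁅u, σ h hform₁ hform₂ v⁆ = 0 := cross_zero s₁ s₂ hinf _ _ hu hσv
  have c2 : ⁅σ h hform₁ hform₂ u, v⁆ = 0 := by
    rw [← lie_skew]
    rw [cross_zero s₁ s₂ hinf _ _ hv hσu, neg_zero]
  rw [lie_add, add_lie, add_lie, c1, c2, ← sigma_lie]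
  abel

include hform₁ hform₂ in
lemma exists_J (s₁ s₂ : LieIdeal ℂ s) (hinf : s₁ ⊓ s₂ = ⊥) (hsup : s₁ ⊔ s₂ = ⊤)
    (hst₁ : ∀ x ∈ s₁, σ h hform₁ hform₂ x ∈ s₂)
    (hchar : ∀ z : s, z ∈ h ↔ ∃ x ∈ s₁, z = x + σ h hform₁ hform₂ x) :
    ∃ J : h →ₗ[ℝ] h, (∀ x : h, J (J x) = -x) ∧
      (∀ x y : h, J ⁅x, y⁆ = ⁅J x, y⁆) ∧ (∀ x y : h, J ⁅x, y⁆ = ⁅x, J y⁆) := by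
  have hcompl : IsCompl (LieSubmodule.toSubmodule s₁) (LieSubmodule.toSubmodule s₂) := by
    rw [LieSubmodule.isCompl_toSubmodule]
    exact ⟨disjoint_iff.mpr hinf, codisjoint_iff.mpr hsup⟩
  set pr := Submodule.projectionOnto _ _ hcompl with hprdef
  set P : s →ₗ[ℂ] s := (LieSubmodule.toSubmodule s₁).subtype ∘ₗ pr with hPdef
  have P_mem : ∀ x : s, P x ∈ s₁ := fun x => (pr x).2
  have P_left : ∀ x : s, x ∈ s₁ → P x = x := by
    intro x hx
    have : pr x = ⟨x, hx⟩ := Submodule.projectionOnto_apply_left hcompl ⟨x, hx⟩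
    show ((pr x : LieSubmodule.toSubmodule s₁) : s) = x
    rw [this]
  have P_right : ∀ x : s, x ∈ s₂ → P x = 0 := by
    intro x hx
    have : pr x = 0 := Submodule.projectionOnto_apply_of_mem_right hcompl hx
    show ((pr x : LieSubmodule.toSubmodule s₁) : s) = 0
    rw [this]
    rfl
  have hdec : ∀ z : s, z ∈ h → z = P z + σ h hform₁ hform₂ (P z) := by
    intro z hz
    obtain ⟨x, hx, hxe⟩ := (hchar z).mp hz
    have hPz : P z = x := by
      rw [hxe, map_add, P_left x hx, P_right _ (hst₁ x hx), add_zero]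
    rw [hPz]
    exact hxe
  set F : s →ₗ[ℝ] s :=
    (LinearMap.id + σ h hform₁ hform₂) ∘ₗ mI ∘ₗ (P.restrictScalars ℝ) with hFdef
  have hF : ∀ z : s, F z = (Complex.I : ℂ) • P z
      + σ h hform₁ hform₂ ((Complex.I : ℂ) • P z) := fun z => rfl
  have hImem : ∀ z : s, (Complex.I : ℂ) • P z ∈ s₁ :=
    fun z => (LieSubmodule.toSubmodule s₁).smul_mem _ (P_mem z)
  have memF : ∀ z : s, F z ∈ h := by
    intro z
    rw [hchar]
    exact ⟨(Complex.I : ℂ) • P z, hImem z, hF z⟩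
  have hPF : ∀ z : s, P (F z) = (Complex.I : ℂ) • P z := by
    intro z
    rw [hF, map_add, P_left _ (hImem z), P_right _ (hst₁ _ (hImem z)), add_zero]
  have hbrP : ∀ z w : s, z ∈ h → w ∈ h →
      ⁅z, w⁆ = ⁅P z, P w⁆ + σ h hform₁ hform₂ ⁅P z, P w⁆ := by
    intro z w hz hw
    conv_lhs => rw [hdec z hz, hdec w hw]
    exact sum_bracket h hform₁ hform₂ s₁ s₂ hinf _ _ (P_mem z) (P_mem w)
      (hst₁ _ (P_mem z)) (hst₁ _ (P_mem w))
  have hPbr : ∀ z w : s, z ∈ h → w ∈ h → P ⁅z, w⁆ = ⁅P z, P w⁆ := by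
    intro z w hz hw
    have h1 : ⁅P z, P w⁆ ∈ s₁ := s₁.lie_mem (P_mem w)
    rw [hbrP z w hz hw, map_add, P_left _ h1, P_right _ (hst₁ _ h1), add_zero]
  refine ⟨{ toFun := fun z => ⟨F ↑z, memF ↑z⟩
            map_add' := fun a b => Subtype.ext (by
              show F ((a : s) + b) = F ↑a + F ↑b
              rw [map_add])
            map_smul' := fun r a => Subtype.ext (by
              show F (r • (a : s)) = r • F ↑a
              rw [map_smul]) }, ?_, ?_, ?_⟩
  · -- J ∘ J = -1
    intro z
    apply Subtype.ext
    show F (F ↑z) = -(z : s)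
    rw [hF (F ↑z), hPF, smul_smul, Complex.I_mul_I, neg_one_smul, map_neg]
    conv_rhs => rw [hdec ↑z z.2]
    abel
  · -- J ⁅x, y⁆ = ⁅J x, y⁆
    intro z w
    apply Subtype.ext
    show F ↑⁅z, w⁆ = ⁅F ↑z, (w : s)⁆
    have hco : (↑⁅z, w⁆ : s) = ⁅(z : s), (w : s)⁆ := rfl
    rw [hco, hF, hPbr ↑z ↑w z.2 w.2]
    conv_rhs => rw [hF ↑z, hdec ↑w w.2]
    rw [sum_bracket h hform₁ hform₂ s₁ s₂ hinf _ _ (hImem ↑z) (P_mem ↑w)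
      (hst₁ _ (hImem ↑z)) (hst₁ _ (P_mem ↑w)), smul_lie]
  · -- J ⁅x, y⁆ = ⁅x, J y⁆
    intro z w
    apply Subtype.ext
    show F ↑⁅z, w⁆ = ⁅(z : s), F ↑w⁆
    have hco : (↑⁅z, w⁆ : s) = ⁅(z : s), (w : s)⁆ := rfl
    rw [hco, hF, hPbr ↑z ↑w z.2 w.2]
    conv_rhs => rw [hF ↑w, hdec ↑z z.2]
    rw [sum_bracket h hform₁ hform₂ s₁ s₂ hinf _ _ (P_mem ↑z) (hImem ↑w)
      (hst₁ _ (P_mem ↑z)) (hst₁ _ (hImem ↑w)), lie_smul]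

end DelormeAux


/-- Lemma 4 of Delorme.
Let `h` be a simple real form of a finite-dimensional complex semisimple Lie algebra `s`.
(i) `s` is not simple iff `h` admits a complex structure.
(ii) In that case `s` is the direct product of two simple ideals `s₁, s₂`, each isomorphic
to `h` (as real Lie algebras).
(iii) Still in that case, there is a `ℂ`-antilinear Lie algebra isomorphism `τ` from `s₁`
onto `s₂` with `h = {X + τ X | X ∈ s₁}`. -/
theorem simple_real_form_of_nonsimple_complex
    (s : Type*) [LieRing s] [LieAlgebra ℝ s] [LieAlgebra ℂ s] [IsScalarTower ℝ ℂ s]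
    [FiniteDimensional ℂ s] [LieAlgebra.IsSemisimple ℂ s]
    (h : LieSubalgebra ℝ s) [LieAlgebra.IsSimple ℝ h]
    -- `h` is a real form of `s` : `s = h ⊕ i h`
    (hform₁ : ∀ x : s, ∃ y ∈ h, ∃ z ∈ h, x = y + (Complex.I : ℂ) • z)
    (hform₂ : ∀ y ∈ h, ∀ z ∈ h, y + (Complex.I : ℂ) • z = (0 : s) → y = 0 ∧ z = 0) :
    (¬ LieAlgebra.IsSimple ℂ s ↔
      ∃ J : h →ₗ[ℝ] h, (∀ x : h, J (J x) = -x) ∧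
        (∀ x y : h, J ⁅x, y⁆ = ⁅J x, y⁆) ∧ (∀ x y : h, J ⁅x, y⁆ = ⁅x, J y⁆)) ∧
    (¬ LieAlgebra.IsSimple ℂ s →
      ∃ s₁ s₂ : LieIdeal ℂ s, LieAlgebra.IsSimple ℂ s₁ ∧ LieAlgebra.IsSimple ℂ s₂ ∧
        s₁ ⊓ s₂ = ⊥ ∧ s₁ ⊔ s₂ = ⊤ ∧
        -- (ii) each of `s₁`, `s₂` is isomorphic, as a real Lie algebra, to `h`
        (∃ φ : s →ₗ[ℝ] s, (∀ x ∈ s₁, φ x ∈ h) ∧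
          (∀ y ∈ h, ∃ x ∈ s₁, φ x = y) ∧ (∀ x ∈ s₁, φ x = 0 → x = 0) ∧
          (∀ x ∈ s₁, ∀ y ∈ s₁, φ ⁅x, y⁆ = ⁅φ x, φ y⁆)) ∧
        (∃ φ : s →ₗ[ℝ] s, (∀ x ∈ s₂, φ x ∈ h) ∧
          (∀ y ∈ h, ∃ x ∈ s₂, φ x = y) ∧ (∀ x ∈ s₂, φ x = 0 → x = 0) ∧
          (∀ x ∈ s₂, ∀ y ∈ s₂, φ ⁅x, y⁆ = ⁅φ x, φ y⁆)) ∧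
        -- (iii) a ℂ-antilinear isomorphism `τ : s₁ ≃ s₂` with `h = {X + τ X | X ∈ s₁}`
        (∃ τ : s →ₗ[ℝ] s, (∀ x ∈ s₁, τ x ∈ s₂) ∧
          (∀ y ∈ s₂, ∃ x ∈ s₁, τ x = y) ∧ (∀ x ∈ s₁, τ x = 0 → x = 0) ∧
          (∀ x ∈ s₁, ∀ y ∈ s₁, τ ⁅x, y⁆ = ⁅τ x, τ y⁆) ∧
          (∀ (c : ℂ), ∀ x ∈ s₁, τ (c • x) = (starRingEnd ℂ c) • τ x) ∧
          (∀ z : s, z ∈ h ↔ ∃ x ∈ s₁, z = x + τ x))) := by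
  constructor
  · constructor
    · intro hns
      obtain ⟨s₁, s₂, hs₁, hs₂, hinf, hsup, hst₁, hst₂, hchar⟩ :=
        DelormeAux.main_construction h hform₁ hform₂ hns
      exact DelormeAux.exists_J h hform₁ hform₂ s₁ s₂ hinf hsup hst₁ hchar
    · rintro ⟨J, hJ2, hJl, hJr⟩
      exact DelormeAux.not_simple_of_J h hform₁ hform₂ J hJ2 hJr
  · intro hns
    obtain ⟨s₁, s₂, hs₁, hs₂, hinf, hsup, hst₁, hst₂, hchar⟩ :=
      DelormeAux.main_construction h hform₁ hform₂ hns
    have hdisj : ∀ x : s, x ∈ s₁ → x ∈ s₂ → x = 0 := by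
      intro x h1 h2
      have : x ∈ s₁ ⊓ s₂ := (LieSubmodule.mem_inf _ _ _).mpr ⟨h1, h2⟩
      rw [hinf, LieSubmodule.mem_bot] at this
      exact this
    have hinf' : s₂ ⊓ s₁ = ⊥ := by rw [inf_comm]; exact hinf
    refine ⟨s₁, s₂, LieAlgebra.IsSemisimple.isSimple_of_isAtom s₁ hs₁,
      LieAlgebra.IsSemisimple.isSimple_of_isAtom s₂ hs₂, hinf, hsup, ?_, ?_, ?_⟩
    · -- (ii) for s₁ : the map x ↦ x + σ x
      refine ⟨LinearMap.id + DelormeAux.σ h hform₁ hform₂, ?_, ?_, ?_, ?_⟩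
      · intro x hx
        show x + DelormeAux.σ h hform₁ hform₂ x ∈ h
        exact (hchar _).mpr ⟨x, hx, rfl⟩
      · intro y hy
        obtain ⟨x, hx, hxe⟩ := (hchar y).mp hy
        exact ⟨x, hx, hxe.symm⟩
      · intro x hx hx0
        replace hx0 : x + DelormeAux.σ h hform₁ hform₂ x = 0 := hx0
        have hx2 : x ∈ s₂ := by
          have : x = -DelormeAux.σ h hform₁ hform₂ x := by
            linear_combination (norm := module) hx0
          rw [this]
          exact neg_mem (hst₁ x hx)
        exact hdisj x hx hx2
      · intro x hx y hy
        show ⁅x, y⁆ + DelormeAux.σ h hform₁ hform₂ ⁅x, y⁆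
            = ⁅x + DelormeAux.σ h hform₁ hform₂ x, y + DelormeAux.σ h hform₁ hform₂ y⁆
        exact (DelormeAux.sum_bracket h hform₁ hform₂ s₁ s₂ hinf x y hx hy
          (hst₁ x hx) (hst₁ y hy)).symm
    · -- (ii) for s₂ : the same map x ↦ x + σ x
      refine ⟨LinearMap.id + DelormeAux.σ h hform₁ hform₂, ?_, ?_, ?_, ?_⟩
      · intro x hx
        show x + DelormeAux.σ h hform₁ hform₂ x ∈ h
        refine (hchar _).mpr ⟨DelormeAux.σ h hform₁ hform₂ x, hst₂ x hx, ?_⟩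
        rw [DelormeAux.sigma_sigma, add_comm]
      · intro y hy
        obtain ⟨x, hx, hxe⟩ := (hchar y).mp hy
        refine ⟨DelormeAux.σ h hform₁ hform₂ x, hst₁ x hx, ?_⟩
        show DelormeAux.σ h hform₁ hform₂ x
            + DelormeAux.σ h hform₁ hform₂ (DelormeAux.σ h hform₁ hform₂ x) = y
        rw [DelormeAux.sigma_sigma, add_comm]
        exact hxe.symm
      · intro x hx hx0
        replace hx0 : x + DelormeAux.σ h hform₁ hform₂ x = 0 := hx0
        have hx1 : x ∈ s₁ := by
          have : x = -DelormeAux.σ h hform₁ hform₂ x := by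
            linear_combination (norm := module) hx0
          rw [this]
          exact neg_mem (hst₂ x hx)
        exact hdisj x hx1 hx
      · intro x hx y hy
        show ⁅x, y⁆ + DelormeAux.σ h hform₁ hform₂ ⁅x, y⁆
            = ⁅x + DelormeAux.σ h hform₁ hform₂ x, y + DelormeAux.σ h hform₁ hform₂ y⁆
        exact (DelormeAux.sum_bracket h hform₁ hform₂ s₂ s₁ hinf' x y hx hy
          (hst₂ x hx) (hst₂ y hy)).symm
    · -- (iii) τ = σ
      refine ⟨DelormeAux.σ h hform₁ hform₂, hst₁, ?_, ?_, ?_, ?_, ?_⟩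
      · intro y hy
        exact ⟨DelormeAux.σ h hform₁ hform₂ y, hst₂ y hy,
          DelormeAux.sigma_sigma h hform₁ hform₂ y⟩
      · intro x _ hx0
        have := congrArg (DelormeAux.σ h hform₁ hform₂) hx0
        rwa [DelormeAux.sigma_sigma, map_zero] at this
      · intro x _ y _
        exact DelormeAux.sigma_lie h hform₁ hform₂ x y
      · intro c x _
        exact DelormeAux.sigma_smul h hform₁ hform₂ c x
      · exact hchar
end

section
/- Every isomorphism of real Lie algebras between (the underlying real Lie algebras of) two finite-dimensional complex simple Lie algebras is either ℂ-linear or ℂ-antilinear. -/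
/-!
Transport multiplication by `i` along `f`: `T = f ∘ (i • ·) ∘ f⁻¹` is an additive map of `g₂`
with `T ⁅x, y⁆ = ⁅x, T y⁆` and `T ∘ T = -1`. On a simple Lie algebra such a map is automatically
`ℂ`-linear, since the `c`-homogeneous vectors form an ideal containing every bracket; then the
`i`-eigenspace of `T` is an ideal too, so either `T = i` or that eigenspace is zero, and in the
latter case `T v + i v`, which lies in it because `T² = -1`, vanishes, i.e. `T = -i`.
These say that `f` is `ℂ`-linear, resp. antilinear.
-/

open Complex

lemma Complex.smul_eq_re_smul_add_im_smul_I_smul {V : Type*} [AddCommGroup V] [Module ℂ V]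
    [Module ℝ V] [IsScalarTower ℝ ℂ V] (c : ℂ) (v : V) :
    c • v = c.re • v + c.im • (I • v) := by
  conv_lhs => rw [← c.re_add_im]
  rw [add_smul, mul_smul, ← algebraMap_smul ℂ c.re v, ← algebraMap_smul ℂ c.im (I • v)]
  rfl

lemma LinearMap.map_complex_smul_of_map_I_smul {V W : Type*}
    [AddCommGroup V] [Module ℂ V] [Module ℝ V] [IsScalarTower ℝ ℂ V]
    [AddCommGroup W] [Module ℂ W] [Module ℝ W] [IsScalarTower ℝ ℂ W]
    (σ : ℂ →ₐ[ℝ] ℂ) (φ : V →ₗ[ℝ] W) (h : ∀ v, φ (I • v) = σ I • φ v) (c : ℂ) (v : V) :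
    φ (c • v) = σ c • φ v := by
  have hσ : σ c = c.re + c.im * σ I := by
    conv_lhs => rw [← c.re_add_im]
    rw [map_add, map_mul, AlgHom.map_coe_real_complex, AlgHom.map_coe_real_complex]
    rfl
  rw [smul_eq_re_smul_add_im_smul_I_smul, map_add, map_smul, map_smul, h, hσ, add_smul, mul_smul,
    ← algebraMap_smul ℂ c.re (φ v), ← algebraMap_smul ℂ c.im (σ I • φ v)]
  rfl

namespace LieAlgebra.IsSimple

variable {R L : Type*} [CommRing R] [LieRing L] [LieAlgebra R L] [IsSimple R L]

lemma eq_top_of_lie_mem (J : LieIdeal R L) (h : ∀ x y : L, ⁅x, y⁆ ∈ J) : J = ⊤ :=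
  (eq_bot_or_eq_top J).resolve_left fun hJ ↦
    non_abelian R (L := L) ⟨fun x y ↦ by simpa [hJ] using h x y⟩

variable (T : L →+ L) (hT : ∀ x y : L, T ⁅x, y⁆ = ⁅x, T y⁆)
include hT

lemma map_smul_of_map_lie_eq_lie_map (c : R) (v : L) : T (c • v) = c • T v := by
  let J : LieIdeal R L :=
    { carrier := {v | ∀ c : R, T (c • v) = c • T v}
      zero_mem' := by simp
      add_mem' := fun hv hw c ↦ by simp only [smul_add, map_add, hv c, hw c]
      smul_mem' := fun c' v hv c ↦ by rw [smul_smul, hv, hv, smul_smul]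
      lie_mem := fun {z v} hv c ↦ by rw [← lie_smul, hT, hT, hv, lie_smul] }
  have hJ : J = ⊤ := eq_top_of_lie_mem J fun x y c ↦ by
    rw [← smul_lie, hT, hT, smul_lie]
  exact (hJ ▸ LieSubmodule.mem_top v : v ∈ J) c

lemma eq_smul_or_eq_neg_smul_of_map_lie_eq_lie_map (i : R) (hT2 : ∀ v, T (T v) = (i * i) • v) :
    (∀ v, T v = i • v) ∨ ∀ v, T v = -(i • v) := by
  have hlin := map_smul_of_map_lie_eq_lie_map (R := R) T hT
  let K : LieIdeal R L :=
    { carrier := {v | T v = i • v}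
      zero_mem' := by simp
      add_mem' := fun {v w} (hv : T v = i • v) (hw : T w = i • w) ↦
        show T (v + w) = i • (v + w) by rw [map_add, hv, hw, smul_add]
      smul_mem' := fun c v (hv : T v = i • v) ↦
        show T (c • v) = i • c • v by rw [hlin, hv, smul_comm]
      lie_mem := fun {z v} (hv : T v = i • v) ↦
        show T ⁅z, v⁆ = i • ⁅z, v⁆ by rw [hT, hv, lie_smul] }
  rcases eq_bot_or_eq_top K with hK | hK
  · right
    intro v
    have hw : T v + i • v ∈ K := by
      change T (T v + i • v) = i • (T v + i • v)
      rw [map_add, hT2, hlin, smul_add, smul_smul, add_comm]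
    rw [hK, LieSubmodule.mem_bot] at hw
    exact eq_neg_of_add_eq_zero_left hw
  · exact Or.inl fun v ↦ (hK ▸ LieSubmodule.mem_top v : v ∈ K)

end LieAlgebra.IsSimple

theorem real_iso_of_complex_simple_is_linear_or_antilinear_general
    (g₁ : Type*) [LieRing g₁] [LieAlgebra ℝ g₁] [LieAlgebra ℂ g₁] [IsScalarTower ℝ ℂ g₁]
    (g₂ : Type*) [LieRing g₂] [LieAlgebra ℝ g₂] [LieAlgebra ℂ g₂] [IsScalarTower ℝ ℂ g₂]
    [LieAlgebra.IsSimple ℂ g₂]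
    (f : g₁ →ₗ[ℝ] g₂) (hbij : Function.Bijective f)
    (hbracket : ∀ x y : g₁, f ⁅x, y⁆ = ⁅f x, f y⁆) :
    (∀ (c : ℂ) (x : g₁), f (c • x) = c • f x) ∨
    (∀ (c : ℂ) (x : g₁), f (c • x) = (starRingEnd ℂ c) • f x) := by
  let e := LinearEquiv.ofBijective f hbij
  let T : g₂ →+ g₂ := AddMonoidHom.mk' (fun v ↦ f (I • e.symm v)) fun v w ↦ by simp [smul_add]
  have hTf (a : g₁) : T (f a) = f (I • a) :=
    congrArg (fun a ↦ f (I • a)) (e.symm_apply_apply a)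
  have hT (x y : g₂) : T ⁅x, y⁆ = ⁅x, T y⁆ := by
    obtain ⟨a, rfl⟩ := hbij.2 x
    obtain ⟨b, rfl⟩ := hbij.2 y
    rw [← hbracket, hTf, hTf, ← lie_smul, hbracket]
  have hT2 (v : g₂) : T (T v) = (I * I) • v := by
    obtain ⟨a, rfl⟩ := hbij.2 v
    simp [hTf, smul_smul]
  rcases LieAlgebra.IsSimple.eq_smul_or_eq_neg_smul_of_map_lie_eq_lie_map T hT I hT2 with hTI | hTI
  · exact Or.inl <| f.map_complex_smul_of_map_I_smul (AlgHom.id ℝ ℂ) fun a ↦ by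
      rw [← hTf, hTI]; rfl
  · exact Or.inr <| f.map_complex_smul_of_map_I_smul conjAe fun a ↦ by
      simp [← hTf, hTI]

/-- Lemma 6 of Delorme.
Every isomorphism of real Lie algebras between (the underlying real Lie algebras of) two
finite-dimensional complex simple Lie algebras is either `ℂ`-linear or `ℂ`-antilinear. -/
theorem real_iso_of_complex_simple_is_linear_or_antilinear
    (g₁ : Type*) [LieRing g₁] [LieAlgebra ℝ g₁] [LieAlgebra ℂ g₁] [IsScalarTower ℝ ℂ g₁]
    [FiniteDimensional ℂ g₁] [LieAlgebra.IsSimple ℂ g₁]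
    (g₂ : Type*) [LieRing g₂] [LieAlgebra ℝ g₂] [LieAlgebra ℂ g₂] [IsScalarTower ℝ ℂ g₂]
    [FiniteDimensional ℂ g₂] [LieAlgebra.IsSimple ℂ g₂]
    (f : g₁ →ₗ[ℝ] g₂) (hbij : Function.Bijective f)
    (hbracket : ∀ x y : g₁, f ⁅x, y⁆ = ⁅f x, f y⁆) :
    (∀ (c : ℂ) (x : g₁), f (c • x) = c • f x) ∨
    (∀ (c : ℂ) (x : g₁), f (c • x) = (starRingEnd ℂ c) • f x) :=
  real_iso_of_complex_simple_is_linear_or_antilinear_general g₁ g₂ f hbij hbracket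
end
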